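/- Let V be a real inner product space with inner product (·,·) and a symmetric positive semidefinite bilinear form a(·,·). For any three elements u^{n+1}, u^n, u^{n-1} in V satisfying the implicit scheme (u^{n+1} - 2u^n + u^{n-1}, v) + (τ²/4) a(u^{n+1} + 2u^n + u^{n-1}, v) = 0 for all v in V (with τ > 0), the discrete energy E^{n+1/2} = ‖(u^{n+1}-u^n)/τ‖² + ‖(u^{n+1}+u^n)/2‖_a² equals E^{n-1/2} = ‖(u^n-u^{n-1})/τ‖² + ‖(u^n+u^{n-1})/2‖_a². -/
import Mathlib


open RealInnerProductSpace

theorem stmt0 {V : Type*} [NormedAddCommGroup V] [InnerProductSpace ℝ V]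
    (a : V →ₗ[ℝ] V →ₗ[ℝ] ℝ) (hsymm : ∀ x y, a x y = a y x) (hpsd : ∀ x, 0 ≤ a x x)
    (τ : ℝ) (hτ : 0 < τ) (u0 u1 u2 : V)
    (hscheme : ∀ v : V,
      ⟪u2 - (2:ℝ) • u1 + u0, v⟫ + (τ^2 / 4) * a (u2 + (2:ℝ) • u1 + u0) v = 0) :
    ‖(1/τ) • (u2 - u1)‖^2 + a ((1/2 : ℝ) • (u2 + u1)) ((1/2 : ℝ) • (u2 + u1))
      = ‖(1/τ) • (u1 - u0)‖^2 + a ((1/2 : ℝ) • (u1 + u0)) ((1/2 : ℝ) • (u1 + u0)) := by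
  have h := hscheme (u2 - u0)
  have h21 := hsymm u2 u1
  have h20 := hsymm u2 u0
  have h10 := hsymm u1 u0
  have i21 := real_inner_comm u2 u1
  have i20 := real_inner_comm u2 u0
  have i10 := real_inner_comm u1 u0
  rw [← real_inner_self_eq_norm_sq, ← real_inner_self_eq_norm_sq]
  simp only [inner_sub_left, inner_sub_right, inner_add_left, inner_add_right,
    inner_smul_left, inner_smul_right, map_add, map_sub, map_smul,
    LinearMap.add_apply, LinearMap.sub_apply, LinearMap.smul_apply,
    RCLike.conj_to_real, smul_eq_mul] at h ⊢
  have hτ2 : (τ:ℝ)^2 ≠ 0 := pow_ne_zero _ hτ.ne'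
  field_simp
  ring_nf
  ring_nf at h
  nlinarith [h, sq_nonneg τ]
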